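/- Let $a \in \R^{n\times N}$ be an extreme point of the unit ball of the Orlicz space on $\R^{nN}$ with Orlicz function $M_{\ell N}(t)=\max(t-1/(\ell N),0)$ having all entries positive. Then $a$ has exactly one entry equal to $1 + \frac{1}{\ell N}$ and all other entries equal to $\frac{1}{\ell N}$. -/

import Mathlib

/-- Characterization of positive extreme points of the unit ball of the Orlicz
space with Orlicz function `M_{ℓN}(t) = max(t - 1/(ℓN), 0)`: exactly one entry
equals `1 + 1/(ℓN)` and all others equal `1/(ℓN)`. -/
theorem stmt11 (n N ℓ : ℕ) (hn : 1 ≤ n) (hN : 1 ≤ N) (hℓ1 : 1 ≤ ℓ) (hℓ : ℓ ≤ n)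
    (a : Fin n × Fin N → ℝ)
    (hpos : ∀ p, 0 < a p)
    (hext : a ∈ Set.extremePoints ℝ
      {x : Fin n × Fin N → ℝ | ∑ p, max (|x p| - 1 / ((ℓ : ℝ) * N)) 0 ≤ 1}) :
    ∃ p₀ : Fin n × Fin N, a p₀ = 1 + 1 / ((ℓ : ℝ) * N) ∧
      ∀ p, p ≠ p₀ → a p = 1 / ((ℓ : ℝ) * N) := by
  classical
  set c : ℝ := 1 / ((ℓ : ℝ) * N) with hc_def
  have hℓR : (0:ℝ) < (ℓ : ℝ) := by exact_mod_cast hℓ1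
  have hNR : (0:ℝ) < (N : ℝ) := by exact_mod_cast hN
  have hc : 0 < c := by
    rw [hc_def]; positivity
  have hne : Nonempty (Fin n × Fin N) := ⟨⟨⟨0, hn⟩, ⟨0, hN⟩⟩⟩
  have habs : ∀ p, |a p| = a p := fun p => abs_of_pos (hpos p)
  set S : ℝ := ∑ p, max (|a p| - c) 0 with hS_def
  have hS : S ≤ 1 := hext.1
  -- key extremeness consequence
  have key : ∀ y z : Fin n × Fin N → ℝ,
      (∑ p, max (|y p| - c) 0 ≤ 1) → (∑ p, max (|z p| - c) 0 ≤ 1) →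
      (∀ q, y q + z q = 2 * a q) → y = a := by
    intro y z hy hz hyz
    refine hext.2 hy hz ?_
    refine ⟨1/2, 1/2, by norm_num, by norm_num, by norm_num, ?_⟩
    funext q
    have := hyz q
    simp only [Pi.add_apply, Pi.smul_apply, smul_eq_mul]
    linarith
  -- sum after a single-coordinate update
  have sum_update : ∀ (p : Fin n × Fin N) (v : ℝ),
      ∑ q, max (|Function.update a p v q| - c) 0
        = max (|v| - c) 0 + ∑ q ∈ Finset.univ.erase p, max (|a q| - c) 0 := by
    intro p v
    rw [← Finset.add_sum_erase _ (fun q => max (|Function.update a p v q| - c) 0)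
      (Finset.mem_univ p)]
    congr 1
    · simp
    · apply Finset.sum_congr rfl
      intro q hq
      rw [Function.update_of_ne (Finset.ne_of_mem_erase hq)]
  have S_split : ∀ p : Fin n × Fin N,
      S = max (|a p| - c) 0 + ∑ q ∈ Finset.univ.erase p, max (|a q| - c) 0 := by
    intro p
    rw [hS_def, ← Finset.add_sum_erase _ _ (Finset.mem_univ p)]
  -- Step 1 : S = 1
  have hS1 : S = 1 := by
    by_contra h
    have hSlt : S < 1 := lt_of_le_of_ne hS h
    obtain ⟨p⟩ := hne
    set ε := 1 - S with hε_def
    have hεpos : 0 < ε := by linarith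
    have bound : ∀ v : ℝ, |v| ≤ |a p| + ε →
        ∑ q, max (|Function.update a p v q| - c) 0 ≤ 1 := by
      intro v hv
      rw [sum_update p v]
      have h1 : max (|v| - c) 0 ≤ max (|a p| - c) 0 + ε := by
        rcases le_or_gt (|v| - c) 0 with h | h
        · rw [max_eq_right h]
          have := le_max_right (|a p| - c) (0:ℝ)
          linarith
        · rw [max_eq_left h.le]
          have := le_max_left (|a p| - c) (0:ℝ)
          linarith
      have := S_split p
      linarith
    have hy := bound (a p + ε) (by
      rw [habs p, abs_of_pos (by linarith [hpos p])])
    have hz := bound (a p - ε) (by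
      rw [habs p]
      have := abs_sub_abs_le_abs_sub (a p) ε
      have h2 : |a p - ε| ≤ |a p| + |ε| := abs_sub (a p) ε
      rw [abs_of_pos hεpos] at h2
      rw [habs p] at h2; linarith)
    have heq := key _ _ hy hz (by
      intro q
      by_cases hq : q = p
      · subst hq; simp; ring
      · rw [Function.update_of_ne hq, Function.update_of_ne hq]; ring)
    have := congrFun heq p
    simp at this
    linarith
  -- Step 2 : no coordinate is below c
  have hge : ∀ p, c ≤ a p := by
    intro p
    by_contra h
    push_neg at h
    set ε := min (c - a p) (a p) with hε_def
    have hεpos : 0 < ε := lt_min (by linarith) (hpos p)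
    have hε1 : ε ≤ c - a p := min_le_left _ _
    have hε2 : ε ≤ a p := min_le_right _ _
    have bound : ∀ v : ℝ, |v| ≤ c →
        ∑ q, max (|Function.update a p v q| - c) 0 ≤ 1 := by
      intro v hv
      rw [sum_update p v]
      have h1 : max (|v| - c) 0 = 0 := max_eq_right (by linarith)
      have h0 : max (|a p| - c) 0 = 0 := max_eq_right (by rw [habs p]; linarith)
      have := S_split p
      rw [h0] at this
      linarith [hS]
    have hy := bound (a p + ε) (by rw [abs_of_pos (by linarith [hpos p])]; linarith)
    have hz := bound (a p - ε) (by rw [abs_of_nonneg (by linarith)]; linarith)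
    have heq := key _ _ hy hz (by
      intro q
      by_cases hq : q = p
      · subst hq; simp; ring
      · rw [Function.update_of_ne hq, Function.update_of_ne hq]; ring)
    have := congrFun heq p
    simp at this
    linarith
  -- sum after a two-coordinate update
  have sum_two : ∀ (p q : Fin n × Fin N), p ≠ q → ∀ (u v : ℝ),
      ∑ r, max (|Function.update (Function.update a p u) q v r| - c) 0
        = max (|u| - c) 0 + max (|v| - c) 0
          + ∑ r ∈ (Finset.univ.erase p).erase q, max (|a r| - c) 0 := by
    intro p q hpq u v
    set y := Function.update (Function.update a p u) q v with hy_def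
    have hyp : y p = u := by
      rw [hy_def, Function.update_of_ne hpq, Function.update_self]
    have hyq : y q = v := by rw [hy_def, Function.update_self]
    rw [← Finset.add_sum_erase _ (fun r => max (|y r| - c) 0) (Finset.mem_univ p)]
    have hqmem : q ∈ Finset.univ.erase p := by
      simp [Ne.symm hpq]
    rw [← Finset.add_sum_erase _ (fun r => max (|y r| - c) 0) hqmem]
    rw [hyp, hyq]
    have : ∑ r ∈ (Finset.univ.erase p).erase q, max (|y r| - c) 0
        = ∑ r ∈ (Finset.univ.erase p).erase q, max (|a r| - c) 0 := by
      apply Finset.sum_congr rfl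
      intro r hr
      have hr1 : r ≠ q := Finset.ne_of_mem_erase hr
      have hr2 : r ≠ p := Finset.ne_of_mem_erase (Finset.mem_of_mem_erase hr)
      rw [hy_def, Function.update_of_ne hr1, Function.update_of_ne hr2]
    rw [this]; ring
  have S_split2 : ∀ (p q : Fin n × Fin N), p ≠ q →
      S = max (|a p| - c) 0 + max (|a q| - c) 0
          + ∑ r ∈ (Finset.univ.erase p).erase q, max (|a r| - c) 0 := by
    intro p q hpq
    have hqmem : q ∈ Finset.univ.erase p := by simp [Ne.symm hpq]
    rw [hS_def, ← Finset.add_sum_erase _ _ (Finset.mem_univ p),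
      ← Finset.add_sum_erase _ _ hqmem]
    ring
  -- Step 3 : at most one coordinate is above c
  have hone : ∀ p q, p ≠ q → c < a p → c < a q → False := by
    intro p q hpq hp hq
    set ε := min (a p - c) (a q - c) with hε_def
    have hεpos : 0 < ε := lt_min (by linarith) (by linarith)
    have hε1 : ε ≤ a p - c := min_le_left _ _
    have hε2 : ε ≤ a q - c := min_le_right _ _
    have bound : ∀ u v : ℝ, c ≤ u → c ≤ v → (u - c) + (v - c) = (a p - c) + (a q - c) →
        ∑ r, max (|Function.update (Function.update a p u) q v r| - c) 0 ≤ 1 := by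
      intro u v hu hv huv
      rw [sum_two p q hpq u v]
      have h1 : max (|u| - c) 0 = u - c := by
        rw [abs_of_nonneg (by linarith), max_eq_left (by linarith)]
      have h2 : max (|v| - c) 0 = v - c := by
        rw [abs_of_nonneg (by linarith), max_eq_left (by linarith)]
      have h3 : max (|a p| - c) 0 = a p - c := by
        rw [habs p, max_eq_left (by linarith)]
      have h4 : max (|a q| - c) 0 = a q - c := by
        rw [habs q, max_eq_left (by linarith)]
      have := S_split2 p q hpq
      rw [h3, h4] at this
      rw [h1, h2]
      linarith [hS]
    have hy := bound (a p + ε) (a q - ε) (by linarith) (by linarith) (by ring)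
    have hz := bound (a p - ε) (a q + ε) (by linarith) (by linarith) (by ring)
    have heq := key _ _ hy hz (by
      intro r
      by_cases hr : r = q
      · subst hr; simp [Function.update_of_ne, Function.update_self]; ring
      · rw [Function.update_of_ne hr, Function.update_of_ne hr]
        by_cases hr2 : r = p
        · subst hr2; simp; ring
        · rw [Function.update_of_ne hr2, Function.update_of_ne hr2]; ring)
    have hyp : Function.update (Function.update a p (a p + ε)) q (a q - ε) p = a p + ε := by
      rw [Function.update_of_ne hpq, Function.update_self]
    rw [heq] at hyp
    linarith
  -- Step 4 : find the special coordinate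
  have hex : ∃ p₀, max (|a p₀| - c) 0 ≠ 0 := by
    by_contra h
    push_neg at h
    have : S = 0 := by
      rw [hS_def]
      exact Finset.sum_eq_zero fun p _ => h p
    linarith
  obtain ⟨p₀, hp₀⟩ := hex
  have hp₀c : c < a p₀ := by
    rcases le_or_gt (a p₀) c with h | h
    · exfalso; apply hp₀; rw [habs p₀]; exact max_eq_right (by linarith)
    · exact h
  have hothers : ∀ p, p ≠ p₀ → a p = c := by
    intro p hp
    rcases lt_or_eq_of_le (hge p) with h | h
    · exact absurd (hone p₀ p (Ne.symm hp) hp₀c h) (fun x => x)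
    · exact h.symm
  refine ⟨p₀, ?_, hothers⟩
  have hsum0 : ∑ q ∈ Finset.univ.erase p₀, max (|a q| - c) 0 = 0 := by
    apply Finset.sum_eq_zero
    intro q hq
    rw [habs q, hothers q (Finset.ne_of_mem_erase hq)]
    simp
  have := S_split p₀
  rw [hsum0, habs p₀, max_eq_left (by linarith)] at this
  linarith
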